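/- Let c, r, T > 0 and x ∈ 𝓛. Then: (i) the Lebesgue measure of {t ∈ [0,T] : g_t x ∈ F_{r,c}} is at most r; (ii) if x ∈ F_{T,c} ∖ F_{r,c} then the Lebesgue measure of {t ∈ [0,T] : g_t x ∈ F_{r,c}} equals r; (iii) if g_t x ∈ F_{r,c} for some t ∈ [0,T], then x ∈ F_{T+r,c}. -/

import Mathlib

noncomputable section

open MeasureTheory Metric Filter Topology
open scoped ENNReal

/-- The index of the coordinate `x_{n+2}` (0-indexed: `n+1`). -/
def lastC (n : ℕ) : Fin (n + 2) := Fin.last (n + 1)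

/-- The index of the coordinate `x_{n+1}` (0-indexed: `n`). -/
def sndC (n : ℕ) : Fin (n + 2) := ⟨n, by omega⟩

/-- The quadratic form `Q(x) = x_1² + ⋯ + x_{n+1}² − x_{n+2}²`. -/
def Qf (n : ℕ) (x : EuclideanSpace ℝ (Fin (n + 2))) : ℝ :=
  (∑ i : Fin (n + 1), x (Fin.castSucc i) ^ 2) - x (lastC n) ^ 2

/-- The positive light cone. -/
def lightCone (n : ℕ) : Set (EuclideanSpace ℝ (Fin (n + 2))) :=
  {x | Qf n x = 0 ∧ 0 ≤ x (lastC n)}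

/-- `Λ₀`: the intersection of the light cone with `ℤ^{n+1} × ℤ_{>0}`. -/
def Lat0 (n : ℕ) : Set (EuclideanSpace ℝ (Fin (n + 2))) :=
  {x | x ∈ lightCone n ∧ (∀ i, ∃ m : ℤ, x i = (m : ℝ)) ∧ 0 < x (lastC n)}

/-- The set `F_{T,c}`. -/
def Fset (n : ℕ) (T c : ℝ) : Set (EuclideanSpace ℝ (Fin (n + 2))) :=
  {x | x ∈ lightCone n ∧ x (lastC n) ^ 2 - x (sndC n) ^ 2 < c ^ 2 ∧
    1 ≤ x (sndC n) + x (lastC n) ∧ x (sndC n) + x (lastC n) < Real.exp T}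

/-- The set `E_{T,c}`. -/
def Eset (n : ℕ) (T c : ℝ) : Set (EuclideanSpace ℝ (Fin (n + 2))) :=
  {x | x ∈ lightCone n ∧ 2 * x (lastC n) * (x (lastC n) - x (sndC n)) < c ^ 2 ∧
    1 ≤ x (lastC n) ∧ x (lastC n) < Real.cosh T}

/-- The first `n+1` coordinates of a point of `ℝ^{n+2}`. -/
def firstPart (n : ℕ) (x : EuclideanSpace ℝ (Fin (n + 2))) : EuclideanSpace ℝ (Fin (n + 1)) :=
  WithLp.toLp 2 fun i => x (Fin.castSucc i)

/-- The one-parameter diagonal flow `g_t`. -/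
def gmap (n : ℕ) (t : ℝ) (x : EuclideanSpace ℝ (Fin (n + 2))) :
    EuclideanSpace ℝ (Fin (n + 2)) :=
  WithLp.toLp 2 fun i =>
    if i = sndC n then Real.cosh t * x (sndC n) - Real.sinh t * x (lastC n)
    else if i = lastC n then - Real.sinh t * x (sndC n) + Real.cosh t * x (lastC n)
    else x i

lemma sndC_ne_lastC (n : ℕ) : sndC n ≠ lastC n := by
  simp [sndC, lastC, Fin.ext_iff]

lemma gmap_sndC (n : ℕ) (t : ℝ) (x : EuclideanSpace ℝ (Fin (n+2))) :
    gmap n t x (sndC n) = Real.cosh t * x (sndC n) - Real.sinh t * x (lastC n) := by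
  simp [gmap]

lemma gmap_lastC (n : ℕ) (t : ℝ) (x : EuclideanSpace ℝ (Fin (n+2))) :
    gmap n t x (lastC n) = - Real.sinh t * x (sndC n) + Real.cosh t * x (lastC n) := by
  rw [gmap]
  rw [WithLp.ofLp_toLp]; beta_reduce
  rw [if_neg (Ne.symm (sndC_ne_lastC n)), if_pos rfl]

lemma castSucc_last_eq_sndC (n : ℕ) : Fin.castSucc (Fin.last n) = sndC n := by
  simp [sndC, Fin.ext_iff]

lemma Qf_gmap (n : ℕ) (t : ℝ) (x : EuclideanSpace ℝ (Fin (n+2))) :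
    Qf n (gmap n t x) = Qf n x := by
  have key : ∀ i : Fin n, gmap n t x (Fin.castSucc (Fin.castSucc i)) =
      x (Fin.castSucc (Fin.castSucc i)) := by
    intro i
    have hi := i.isLt
    have h1 : Fin.castSucc (Fin.castSucc i) ≠ sndC n := by
      simp only [sndC, Fin.ne_iff_vne, Fin.coe_castSucc]; omega
    have h2 : Fin.castSucc (Fin.castSucc i) ≠ lastC n := by
      simp only [lastC, Fin.ne_iff_vne, Fin.coe_castSucc, Fin.val_last]; omega
    rw [gmap]
    simp only [WithLp.ofLp_toLp]
    rw [if_neg h1, if_neg h2]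
  unfold Qf
  rw [Fin.sum_univ_castSucc (f := fun i : Fin (n+1) => gmap n t x (Fin.castSucc i) ^ 2),
      Fin.sum_univ_castSucc (f := fun i : Fin (n+1) => x (Fin.castSucc i) ^ 2),
      castSucc_last_eq_sndC]
  simp only [key, gmap_sndC, gmap_lastC]
  linear_combination (x (sndC n) ^ 2 - x (lastC n) ^ 2) * Real.cosh_sq_sub_sinh_sq t

lemma diff_sq_nonneg (n : ℕ) (x : EuclideanSpace ℝ (Fin (n+2))) (hx : x ∈ lightCone n) :
    0 ≤ x (lastC n) ^ 2 - x (sndC n) ^ 2 := by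
  have hQ := hx.1
  unfold Qf at hQ
  rw [Fin.sum_univ_castSucc (f := fun i : Fin (n+1) => x (Fin.castSucc i) ^ 2),
      castSucc_last_eq_sndC] at hQ
  have h1 : (0:ℝ) ≤ ∑ i : Fin n, x (Fin.castSucc (Fin.castSucc i)) ^ 2 :=
    Finset.sum_nonneg fun i _ => sq_nonneg _
  linarith

lemma mem_Fset_gmap_iff (n : ℕ) (r c t : ℝ)
    (x : EuclideanSpace ℝ (Fin (n+2))) (hx : x ∈ lightCone n) :
    gmap n t x ∈ Fset n r c ↔
      x (lastC n) ^ 2 - x (sndC n) ^ 2 < c ^ 2 ∧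
      1 ≤ Real.exp (-t) * (x (sndC n) + x (lastC n)) ∧
      Real.exp (-t) * (x (sndC n) + x (lastC n)) < Real.exp r := by
  have hsum : gmap n t x (sndC n) + gmap n t x (lastC n)
      = Real.exp (-t) * (x (sndC n) + x (lastC n)) := by
    rw [gmap_sndC, gmap_lastC, ← Real.cosh_sub_sinh t]; ring
  have hdiff : gmap n t x (lastC n) - gmap n t x (sndC n)
      = Real.exp t * (x (lastC n) - x (sndC n)) := by
    rw [gmap_sndC, gmap_lastC, ← Real.cosh_add_sinh t]; ring
  have hinv : gmap n t x (lastC n) ^ 2 - gmap n t x (sndC n) ^ 2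
      = x (lastC n) ^ 2 - x (sndC n) ^ 2 := by
    rw [gmap_sndC, gmap_lastC]
    linear_combination (x (lastC n) ^ 2 - x (sndC n) ^ 2) * Real.cosh_sq_sub_sinh_sq t
  constructor
  · rintro ⟨-, hA, h1, h2⟩
    rw [hinv] at hA
    rw [hsum] at h1 h2
    exact ⟨hA, h1, h2⟩
  · rintro ⟨hA, h1, h2⟩
    have hnn := diff_sq_nonneg n x hx
    have hent := Real.exp_pos (-t)
    have het := Real.exp_pos t
    have hu : 0 < x (sndC n) + x (lastC n) := by nlinarith
    have hv : 0 ≤ x (lastC n) - x (sndC n) := by nlinarith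
    have hgl : 0 ≤ gmap n t x (lastC n) := by nlinarith [hsum, hdiff]
    refine ⟨⟨?_, hgl⟩, ?_, ?_, ?_⟩
    · rw [Qf_gmap]; exact hx.1
    · rw [hinv]; exact hA
    · rw [hsum]; exact h1
    · rw [hsum]; exact h2

lemma interval_iff (u t r : ℝ) (hu : 0 < u) :
    (1 ≤ Real.exp (-t) * u ∧ Real.exp (-t) * u < Real.exp r) ↔
      Real.log u - r < t ∧ t ≤ Real.log u := by
  have hmul : Real.exp t * Real.exp (-t) = 1 := by rw [← Real.exp_add]; simp
  have het := Real.exp_pos t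
  have hent := Real.exp_pos (-t)
  constructor
  · rintro ⟨h1, h2⟩
    constructor
    · have hlt : u < Real.exp (t + r) := by
        rw [Real.exp_add]; nlinarith
      have := (Real.log_lt_iff_lt_exp hu).2 hlt
      linarith
    · exact (Real.le_log_iff_exp_le hu).2 (by nlinarith)
  · rintro ⟨h1, h2⟩
    have hel : Real.exp t ≤ u := (Real.le_log_iff_exp_le hu).1 h2
    have hlt : u < Real.exp (t + r) := (Real.log_lt_iff_lt_exp hu).1 (by linarith)
    rw [Real.exp_add] at hlt
    exact ⟨by nlinarith, by nlinarith⟩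

/-- **Section 4 estimates** for visits of the `g_t`-orbit of `x ∈ 𝓛` to `F_{r,c}`. -/
theorem orbit_visit_times (n : ℕ) (hn : 1 ≤ n) (c r T : ℝ) (hc : 0 < c) (hr : 0 < r)
    (hT : 0 < T) (x : EuclideanSpace ℝ (Fin (n + 2))) (hx : x ∈ lightCone n) :
    volume {t ∈ Set.Icc (0 : ℝ) T | gmap n t x ∈ Fset n r c} ≤ ENNReal.ofReal r ∧
    (x ∈ Fset n T c \ Fset n r c →
      volume {t ∈ Set.Icc (0 : ℝ) T | gmap n t x ∈ Fset n r c} = ENNReal.ofReal r) ∧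
    ((∃ t ∈ Set.Icc (0 : ℝ) T, gmap n t x ∈ Fset n r c) → x ∈ Fset n (T + r) c) := by
  have part3 : (∃ t ∈ Set.Icc (0 : ℝ) T, gmap n t x ∈ Fset n r c) → x ∈ Fset n (T + r) c := by
    rintro ⟨t, ht, hmem⟩
    rw [mem_Fset_gmap_iff n r c t x hx] at hmem
    obtain ⟨hA, h1, h2⟩ := hmem
    have hent := Real.exp_pos (-t)
    have het := Real.exp_pos t
    have hu : 0 < x (sndC n) + x (lastC n) := by nlinarith
    obtain ⟨hlo, hhi⟩ := (interval_iff _ t r hu).1 ⟨h1, h2⟩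
    have hloglt : Real.log (x (sndC n) + x (lastC n)) < T + r := by
      cases ht with | intro h0 hT' => linarith
    have h1u : 1 ≤ x (sndC n) + x (lastC n) := by
      have : Real.exp 0 ≤ x (sndC n) + x (lastC n) :=
        (Real.le_log_iff_exp_le hu).1 (by cases ht with | intro h0 hT' => linarith)
      simpa using this
    have h2u : x (sndC n) + x (lastC n) < Real.exp (T + r) :=
      (Real.log_lt_iff_lt_exp hu).1 hloglt
    exact ⟨hx, hA, h1u, h2u⟩
  by_cases hA : x (lastC n) ^ 2 - x (sndC n) ^ 2 < c ^ 2
  · by_cases hu : 0 < x (sndC n) + x (lastC n)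
    · -- main case
      set L := Real.log (x (sndC n) + x (lastC n)) with hL
      have Sdesc : {t ∈ Set.Icc (0 : ℝ) T | gmap n t x ∈ Fset n r c}
          = Set.Icc (0 : ℝ) T ∩ Set.Ioc (L - r) L := by
        ext t
        simp only [Set.mem_setOf_eq, Set.mem_inter_iff, Set.mem_Ioc]
        rw [mem_Fset_gmap_iff n r c t x hx]
        constructor
        · rintro ⟨ht, -, h1, h2⟩
          exact ⟨ht, (interval_iff _ t r hu).1 ⟨h1, h2⟩⟩
        · rintro ⟨ht, hi⟩
          obtain ⟨h1, h2⟩ := (interval_iff _ t r hu).2 hi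
          exact ⟨ht, hA, h1, h2⟩
      refine ⟨?_, ?_, part3⟩
      · rw [Sdesc]
        calc volume (Set.Icc (0 : ℝ) T ∩ Set.Ioc (L - r) L)
            ≤ volume (Set.Ioc (L - r) L) := measure_mono Set.inter_subset_right
          _ = ENNReal.ofReal r := by rw [Real.volume_Ioc]; congr 1; ring
      · rintro ⟨hF, hnF⟩
        obtain ⟨-, -, h1u, h2u⟩ := hF
        have hrL : r ≤ L := by
          have hle : Real.exp r ≤ x (sndC n) + x (lastC n) := by
            by_contra h
            exact hnF ⟨hx, hA, h1u, lt_of_not_ge h⟩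
          exact (Real.le_log_iff_exp_le hu).2 hle
        have hLT : L < T := (Real.log_lt_iff_lt_exp hu).2 h2u
        have hsub : Set.Ioc (L - r) L ⊆ Set.Icc (0 : ℝ) T := by
          rintro t ⟨h1, h2⟩
          exact ⟨by linarith, by linarith⟩
        rw [Sdesc, Set.inter_eq_right.mpr hsub, Real.volume_Ioc]
        congr 1; ring
    · have Sdesc : {t ∈ Set.Icc (0 : ℝ) T | gmap n t x ∈ Fset n r c} = ∅ := by
        ext t
        simp only [Set.mem_setOf_eq, Set.mem_empty_iff_false, iff_false, not_and]
        intro ht hmem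
        rw [mem_Fset_gmap_iff n r c t x hx] at hmem
        have hent := Real.exp_pos (-t)
        have := hmem.2.1
        nlinarith [le_of_not_gt hu]
      refine ⟨?_, ?_, part3⟩
      · rw [Sdesc]; simp
      · rintro ⟨hF, -⟩
        exact absurd hF.2.2.1 (by linarith [le_of_not_gt hu])
  · have Sdesc : {t ∈ Set.Icc (0 : ℝ) T | gmap n t x ∈ Fset n r c} = ∅ := by
      ext t
      simp only [Set.mem_setOf_eq, Set.mem_empty_iff_false, iff_false, not_and]
      intro ht hmem
      rw [mem_Fset_gmap_iff n r c t x hx] at hmem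
      exact hA hmem.1
    refine ⟨?_, ?_, part3⟩
    · rw [Sdesc]; simp
    · rintro ⟨hF, -⟩
      exact absurd hF.2.1 hA
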